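/- Let Θ̄ be a symmetric positive semidefinite d×d matrix and S a real d×d matrix such that SΘ̄Sᵀ ≺ I_d. Let ξ be a random vector in ℝ^d whose distribution is sub-Gaussian with parameters (0, Θ̄). Then for every ν ∈ ℝ^d, ln E[exp(νᵀSξ + ½ξᵀSᵀSξ)] ≤ −½ ln Det(I_d − SΘ̄Sᵀ) + ½ νᵀ[SΘ̄Sᵀ(I_d − SΘ̄Sᵀ)⁻¹]ν. -/

import Mathlib

open MeasureTheory Matrix Real
lemma gauss1_integrable (a : ℝ) : Integrable (fun t : ℝ => exp (a*t - 2⁻¹*t^2)) := by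
  have h : (fun t : ℝ => exp (a*t - 2⁻¹*t^2))
      = fun t : ℝ => exp (2⁻¹*a^2) * exp (-2⁻¹*(t-a)^2) := by
    funext t; rw [← Real.exp_add]; ring_nf
  rw [h]
  exact ((integrable_exp_neg_mul_sq (by norm_num : (0:ℝ) < 2⁻¹)).comp_sub_right a).const_mul _

lemma gauss1_integral (a : ℝ) :
    ∫ t : ℝ, exp (a*t - 2⁻¹*t^2) = Real.sqrt (2*π) * exp (2⁻¹*a^2) := by
  have h : (fun t : ℝ => exp (a*t - 2⁻¹*t^2))
      = fun t : ℝ => exp (2⁻¹*a^2) * exp (-2⁻¹*(t-a)^2) := by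
    funext t; rw [← Real.exp_add]; ring_nf
  rw [h, integral_const_mul]
  have h2 : ∫ t : ℝ, exp (-2⁻¹*(t-a)^2) = ∫ t : ℝ, exp (-2⁻¹*t^2) :=
    integral_sub_right_eq_self (fun t : ℝ => exp (-2⁻¹*t^2)) a
  rw [h2, integral_gaussian]
  rw [mul_comm]
  congr 1
  rw [show π / 2⁻¹ = 2*π by ring]

lemma gaussPi_prod {d : ℕ} (b : Fin d → ℝ) :
    (fun h : Fin d → ℝ => exp (b ⬝ᵥ h - 2⁻¹ * (h ⬝ᵥ h)))
      = fun h : Fin d → ℝ => ∏ i, exp (b i * h i - 2⁻¹ * (h i)^2) := by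
  funext h
  rw [← Real.exp_sum]
  congr 1
  simp [dotProduct, Finset.mul_sum, ← Finset.sum_sub_distrib, pow_two]

lemma gaussPi_integrable {d : ℕ} (b : Fin d → ℝ) :
    Integrable (fun h : Fin d → ℝ => exp (b ⬝ᵥ h - 2⁻¹ * (h ⬝ᵥ h))) := by
  rw [gaussPi_prod]
  exact Integrable.fintype_prod (fun i => gauss1_integrable (b i))

lemma gaussPi_integral {d : ℕ} (b : Fin d → ℝ) :
    ∫ h : Fin d → ℝ, exp (b ⬝ᵥ h - 2⁻¹ * (h ⬝ᵥ h))
      = Real.sqrt (2*π) ^ d * exp (2⁻¹ * (b ⬝ᵥ b)) := by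
  rw [gaussPi_prod, integral_fintype_prod_volume_eq_prod (f := fun i (t : ℝ) => exp (b i * t - 2⁻¹*t^2))]
  simp_rw [gauss1_integral]
  rw [Finset.prod_mul_distrib, Finset.prod_const, ← Real.exp_sum]
  simp [dotProduct, Finset.mul_sum, pow_two]

lemma gaussPiL {d : ℕ} (b : Fin d → ℝ) :
    ∫⁻ h : Fin d → ℝ, ENNReal.ofReal (exp (b ⬝ᵥ h - 2⁻¹ * (h ⬝ᵥ h)))
      = ENNReal.ofReal (Real.sqrt (2*π) ^ d * exp (2⁻¹ * (b ⬝ᵥ b))) := by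
  rw [← ofReal_integral_eq_lintegral_ofReal (gaussPi_integrable b)
    (Filter.Eventually.of_forall fun _ => (exp_pos _).le), gaussPi_integral]

lemma continuous_dotProd {d : ℕ} {X : Type*} [TopologicalSpace X]
    {a b : X → (Fin d → ℝ)} (ha : Continuous a) (hb : Continuous b) :
    Continuous fun x => a x ⬝ᵥ b x := by
  show Continuous fun x => ∑ i, a x i * b x i
  exact continuous_finset_sum _ fun i _ =>
    ((continuous_apply i).comp ha).mul ((continuous_apply i).comp hb)

lemma continuous_mulVec' {d : ℕ} (M : Matrix (Fin d) (Fin d) ℝ) :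
    Continuous fun x : Fin d → ℝ => M *ᵥ x := by
  have h := LinearMap.continuous_of_finiteDimensional (Matrix.toLin' M)
  convert h using 1; funext x; exact (Matrix.toLin'_apply M x).symm


open scoped MatrixOrder in
lemma centralL {d : ℕ} (A : Matrix (Fin d) (Fin d) ℝ) (hA : A.PosDef) (hAs : Aᵀ = A) :
    ∫⁻ h : Fin d → ℝ, ENNReal.ofReal (exp (-(2⁻¹ * (h ⬝ᵥ (A *ᵥ h)))))
      = ENNReal.ofReal (Real.sqrt (2*π) ^ d * (Real.sqrt A.det)⁻¹) := by
  classical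
  set R := CFC.sqrt A with hRdef
  have hRR : R * R = A := CFC.sqrt_mul_sqrt_self A hA.posSemidef.nonneg
  have hRs : Rᵀ = R := by
    have h1 := (CFC.sqrt_nonneg A).posSemidef.1
    rw [Matrix.IsHermitian, Matrix.conjTranspose_eq_transpose_of_trivial] at h1
    exact h1
  have hdetR2 : R.det * R.det = A.det := by rw [← Matrix.det_mul, hRR]
  have hdetpos : 0 < A.det := hA.det_pos
  have hRdet_ne : R.det ≠ 0 := by
    intro h0; rw [h0, mul_zero] at hdetR2; exact hdetpos.ne hdetR2
  have habs : |R.det| = Real.sqrt A.det := by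
    rw [← hdetR2, ← pow_two, Real.sqrt_sq_eq_abs]
  have key : ∀ h : Fin d → ℝ, h ⬝ᵥ (A *ᵥ h) = (R *ᵥ h) ⬝ᵥ (R *ᵥ h) := by
    intro h
    conv_lhs => rw [← hRR, ← Matrix.mulVec_mulVec, Matrix.dotProduct_mulVec,
      ← Matrix.mulVec_transpose, hRs]
  set g : (Fin d → ℝ) → ENNReal := fun x => ENNReal.ofReal (exp (-(2⁻¹ * (x ⬝ᵥ x)))) with hgdef
  have hg : Measurable g := by
    have hc : Continuous fun x : Fin d → ℝ => exp (-(2⁻¹ * (x ⬝ᵥ x))) :=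
      Real.continuous_exp.comp
        ((continuous_const.mul (continuous_dotProd continuous_id continuous_id)).neg)
    exact hc.measurable.ennreal_ofReal
  have hm : Measurable fun h : Fin d → ℝ => Matrix.toLin' R h := by
    simpa [Matrix.toLin'_apply] using (continuous_mulVec' R).measurable
  have hzero := gaussPiL (0 : Fin d → ℝ)
  simp only [zero_dotProduct, zero_sub, dotProduct_zero, mul_zero, Real.exp_zero, mul_one] at hzero
  calc ∫⁻ h : Fin d → ℝ, ENNReal.ofReal (exp (-(2⁻¹ * (h ⬝ᵥ (A *ᵥ h)))))
      = ∫⁻ h : Fin d → ℝ, g (Matrix.toLin' R h) := by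
        simp only [hgdef, Matrix.toLin'_apply]
        congr 1; funext h; rw [key h]
    _ = ∫⁻ x, g x ∂(Measure.map (Matrix.toLin' R) volume) := (lintegral_map hg hm).symm
    _ = ENNReal.ofReal |R.det⁻¹| * ∫⁻ x, g x :=  by
        rw [Real.map_matrix_volume_pi_eq_smul_volume_pi hRdet_ne, lintegral_smul_measure, smul_eq_mul]
    _ = ENNReal.ofReal |R.det⁻¹| * ENNReal.ofReal (Real.sqrt (2*π) ^ d) := by rw [hzero]
    _ = ENNReal.ofReal (Real.sqrt (2*π) ^ d * (Real.sqrt A.det)⁻¹) := by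
        rw [← ENNReal.ofReal_mul (abs_nonneg _), abs_inv, habs, mul_comm]

lemma masterL {d : ℕ} (A : Matrix (Fin d) (Fin d) ℝ) (hA : A.PosDef) (hAs : Aᵀ = A)
    (b : Fin d → ℝ) :
    ∫⁻ h : Fin d → ℝ, ENNReal.ofReal (exp (b ⬝ᵥ h - 2⁻¹ * (h ⬝ᵥ (A *ᵥ h))))
      = ENNReal.ofReal (Real.sqrt (2*π) ^ d * (Real.sqrt A.det)⁻¹
          * exp (2⁻¹ * (b ⬝ᵥ (A⁻¹ *ᵥ b)))) := by
  classical
  have hdet : 0 < A.det := hA.det_pos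
  have hAunit : IsUnit A.det := isUnit_iff_ne_zero.2 hdet.ne'
  set c : Fin d → ℝ := A⁻¹ *ᵥ b with hc
  have hAc : A *ᵥ c = b := by
    rw [hc, Matrix.mulVec_mulVec, Matrix.mul_nonsing_inv _ hAunit, Matrix.one_mulVec]
  -- translation
  have hshift : ∀ h : Fin d → ℝ,
      b ⬝ᵥ (h + c) - 2⁻¹ * ((h + c) ⬝ᵥ (A *ᵥ (h + c)))
        = 2⁻¹ * (b ⬝ᵥ c) + -(2⁻¹ * (h ⬝ᵥ (A *ᵥ h))) := by
    intro h
    have h1 : c ⬝ᵥ (A *ᵥ h) = b ⬝ᵥ h := by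
      rw [Matrix.dotProduct_mulVec, ← Matrix.mulVec_transpose, hAs, hAc]
    have h2 : h ⬝ᵥ (A *ᵥ c) = h ⬝ᵥ b := by rw [hAc]
    have h3 : c ⬝ᵥ (A *ᵥ c) = c ⬝ᵥ b := by rw [hAc]
    rw [Matrix.mulVec_add, dotProduct_add, add_dotProduct, dotProduct_add, dotProduct_add,
      h1, h2, h3, dotProduct_comm c b, dotProduct_comm h b]
    ring
  calc ∫⁻ h : Fin d → ℝ, ENNReal.ofReal (exp (b ⬝ᵥ h - 2⁻¹ * (h ⬝ᵥ (A *ᵥ h))))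
      = ∫⁻ h : Fin d → ℝ, ENNReal.ofReal (exp (b ⬝ᵥ (h + c) - 2⁻¹ * ((h + c) ⬝ᵥ (A *ᵥ (h + c))))) :=
        (lintegral_add_right_eq_self
          (fun h => ENNReal.ofReal (exp (b ⬝ᵥ h - 2⁻¹ * (h ⬝ᵥ (A *ᵥ h))))) c).symm
    _ = ∫⁻ h : Fin d → ℝ, ENNReal.ofReal (exp (2⁻¹ * (b ⬝ᵥ c)))
          * ENNReal.ofReal (exp (-(2⁻¹ * (h ⬝ᵥ (A *ᵥ h))))) := by
        congr 1; funext h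
        rw [hshift h, Real.exp_add, ENNReal.ofReal_mul (exp_pos _).le]
    _ = ENNReal.ofReal (exp (2⁻¹ * (b ⬝ᵥ c)))
          * ∫⁻ h : Fin d → ℝ, ENNReal.ofReal (exp (-(2⁻¹ * (h ⬝ᵥ (A *ᵥ h))))) :=
        lintegral_const_mul' _ _ ENNReal.ofReal_ne_top
    _ = ENNReal.ofReal (Real.sqrt (2*π) ^ d * (Real.sqrt A.det)⁻¹
          * exp (2⁻¹ * (b ⬝ᵥ (A⁻¹ *ᵥ b)))) := by
        rw [centralL A hA hAs, ← ENNReal.ofReal_mul (exp_pos _).le]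
        congr 1
        ring

/-- A probability distribution `P` on `ℝ^d` is sub-Gaussian with parameters `(u, Θ)` if
`ln ∫ exp (hᵀ y) dP(y) ≤ hᵀ u + ½ hᵀ Θ h` for all `h`. -/
def IsSubGaussian {d : ℕ} (P : Measure (Fin d → ℝ)) (u : Fin d → ℝ)
    (Θ : Matrix (Fin d) (Fin d) ℝ) : Prop :=
  ∀ h : Fin d → ℝ, Integrable (fun y => Real.exp (h ⬝ᵥ y)) P ∧
    ∫ y, Real.exp (h ⬝ᵥ y) ∂P ≤ Real.exp (h ⬝ᵥ u + (1/2) * (h ⬝ᵥ (Θ *ᵥ h)))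

theorem stmt15 {d : ℕ} (Θb : Matrix (Fin d) (Fin d) ℝ) (hΘb : Θb.PosSemidef)
    (S : Matrix (Fin d) (Fin d) ℝ) (hS : (1 - S * Θb * Sᵀ).PosDef)
    (P : Measure (Fin d → ℝ)) [IsProbabilityMeasure P] (hP : IsSubGaussian P 0 Θb)
    (v : Fin d → ℝ) :
    Integrable (fun ξ => Real.exp (v ⬝ᵥ (S *ᵥ ξ) + (1/2) * ((S *ᵥ ξ) ⬝ᵥ (S *ᵥ ξ)))) P ∧
    ∫ ξ, Real.exp (v ⬝ᵥ (S *ᵥ ξ) + (1/2) * ((S *ᵥ ξ) ⬝ᵥ (S *ᵥ ξ))) ∂P ≤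
      Real.exp (-(1/2) * Real.log ((1 - S * Θb * Sᵀ).det)
        + (1/2) * (v ⬝ᵥ ((S * Θb * Sᵀ * (1 - S * Θb * Sᵀ)⁻¹) *ᵥ v))) := by
  classical
  simp only [one_div]
  set Q : Matrix (Fin d) (Fin d) ℝ := S * Θb * Sᵀ with hQdef
  set A : Matrix (Fin d) (Fin d) ℝ := 1 - Q with hAdef
  have hth : Θbᵀ = Θb := by
    have h1 := hΘb.1
    rwa [Matrix.IsHermitian, Matrix.conjTranspose_eq_transpose_of_trivial] at h1
  have hQs : Qᵀ = Q := by
    rw [hQdef, Matrix.transpose_mul, Matrix.transpose_mul, Matrix.transpose_transpose, hth,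
      Matrix.mul_assoc]
  have hAs : Aᵀ = A := by rw [hAdef, Matrix.transpose_sub, Matrix.transpose_one, hQs]
  have hdetpos : 0 < A.det := hS.det_pos
  have hAunit : IsUnit A.det := isUnit_iff_ne_zero.2 hdetpos.ne'
  -- key1
  have key1 : ∀ ξ : Fin d → ℝ,
      (∫⁻ h : Fin d → ℝ, ENNReal.ofReal (exp ((Sᵀ *ᵥ (v + h)) ⬝ᵥ ξ - 2⁻¹ * (h ⬝ᵥ h))))
      = ENNReal.ofReal (Real.sqrt (2*π) ^ d)
        * ENNReal.ofReal (exp (v ⬝ᵥ (S *ᵥ ξ) + 2⁻¹ * ((S *ᵥ ξ) ⬝ᵥ (S *ᵥ ξ)))) := by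
    intro ξ
    have e1 : ∀ h : Fin d → ℝ, (Sᵀ *ᵥ (v + h)) ⬝ᵥ ξ - 2⁻¹ * (h ⬝ᵥ h)
        = v ⬝ᵥ (S *ᵥ ξ) + ((S *ᵥ ξ) ⬝ᵥ h - 2⁻¹ * (h ⬝ᵥ h)) := by
      intro h
      rw [Matrix.mulVec_transpose, ← Matrix.dotProduct_mulVec, add_dotProduct,
        dotProduct_comm h (S *ᵥ ξ)]
      ring
    simp_rw [e1, Real.exp_add, ENNReal.ofReal_mul (exp_pos _).le]
    rw [lintegral_const_mul' _ _ ENNReal.ofReal_ne_top, gaussPiL (S *ᵥ ξ),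
      ENNReal.ofReal_mul (by positivity : (0:ℝ) ≤ Real.sqrt (2*π) ^ d)]
    ring
  -- key2
  have key2 : ∀ h : Fin d → ℝ,
      (∫⁻ ξ, ENNReal.ofReal (exp ((Sᵀ *ᵥ (v + h)) ⬝ᵥ ξ - 2⁻¹ * (h ⬝ᵥ h))) ∂P)
      ≤ ENNReal.ofReal (exp (2⁻¹ * ((v + h) ⬝ᵥ (Q *ᵥ (v + h))) - 2⁻¹ * (h ⬝ᵥ h))) := by
    intro h
    have hsplit : ∀ ξ : Fin d → ℝ, exp ((Sᵀ *ᵥ (v + h)) ⬝ᵥ ξ - 2⁻¹ * (h ⬝ᵥ h))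
        = exp ((Sᵀ *ᵥ (v + h)) ⬝ᵥ ξ) * exp (-(2⁻¹ * (h ⬝ᵥ h))) := by
      intro ξ; rw [← Real.exp_add]; ring_nf
    simp_rw [hsplit, ENNReal.ofReal_mul (exp_pos _).le]
    rw [lintegral_mul_const' _ _ ENNReal.ofReal_ne_top]
    have hint := (hP (Sᵀ *ᵥ (v + h))).1
    have hle := (hP (Sᵀ *ᵥ (v + h))).2
    have hQform : (Sᵀ *ᵥ (v + h)) ⬝ᵥ (Θb *ᵥ (Sᵀ *ᵥ (v + h)))
        = (v + h) ⬝ᵥ (Q *ᵥ (v + h)) := by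
      rw [Matrix.mulVec_mulVec]
      conv_lhs => rw [Matrix.mulVec_transpose, ← Matrix.dotProduct_mulVec]
      rw [Matrix.mulVec_mulVec, hQdef, Matrix.mul_assoc]
    have hbound : (∫⁻ ξ, ENNReal.ofReal (exp ((Sᵀ *ᵥ (v + h)) ⬝ᵥ ξ)) ∂P)
        ≤ ENNReal.ofReal (exp (2⁻¹ * ((v + h) ⬝ᵥ (Q *ᵥ (v + h))))) := by
      rw [← ofReal_integral_eq_lintegral_ofReal hint
        (Filter.Eventually.of_forall fun _ => (exp_pos _).le)]
      refine ENNReal.ofReal_le_ofReal ?_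
      refine hle.trans (le_of_eq ?_)
      rw [dotProduct_zero, zero_add, hQform, one_div]
    calc (∫⁻ ξ, ENNReal.ofReal (exp ((Sᵀ *ᵥ (v + h)) ⬝ᵥ ξ)) ∂P)
          * ENNReal.ofReal (exp (-(2⁻¹ * (h ⬝ᵥ h))))
        ≤ ENNReal.ofReal (exp (2⁻¹ * ((v + h) ⬝ᵥ (Q *ᵥ (v + h)))))
          * ENNReal.ofReal (exp (-(2⁻¹ * (h ⬝ᵥ h)))) := by
          exact mul_le_mul_left hbound _
      _ = ENNReal.ofReal (exp (2⁻¹ * ((v + h) ⬝ᵥ (Q *ᵥ (v + h))) - 2⁻¹ * (h ⬝ᵥ h))) := by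
          rw [← ENNReal.ofReal_mul (exp_pos _).le, ← Real.exp_add]
          ring_nf
  -- key3 : compute the h-integral of the bound
  have e3 : ∀ h : Fin d → ℝ, 2⁻¹ * ((v + h) ⬝ᵥ (Q *ᵥ (v + h))) - 2⁻¹ * (h ⬝ᵥ h)
      = 2⁻¹ * (v ⬝ᵥ (Q *ᵥ v)) + ((Q *ᵥ v) ⬝ᵥ h - 2⁻¹ * (h ⬝ᵥ (A *ᵥ h))) := by
    intro h
    have h1 : v ⬝ᵥ (Q *ᵥ h) = (Q *ᵥ v) ⬝ᵥ h := by
      rw [Matrix.dotProduct_mulVec, ← Matrix.mulVec_transpose, hQs]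
    have h2 : h ⬝ᵥ (Q *ᵥ v) = (Q *ᵥ v) ⬝ᵥ h := dotProduct_comm _ _
    have h3 : h ⬝ᵥ (A *ᵥ h) = h ⬝ᵥ h - h ⬝ᵥ (Q *ᵥ h) := by
      rw [hAdef, Matrix.sub_mulVec, dotProduct_sub, Matrix.one_mulVec]
    rw [Matrix.mulVec_add, dotProduct_add, add_dotProduct, add_dotProduct, h1, h2, h3]
    ring
  have key3 : (∫⁻ h : Fin d → ℝ,
        ENNReal.ofReal (exp (2⁻¹ * ((v + h) ⬝ᵥ (Q *ᵥ (v + h))) - 2⁻¹ * (h ⬝ᵥ h))))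
      = ENNReal.ofReal (exp (2⁻¹ * (v ⬝ᵥ (Q *ᵥ v))))
        * ENNReal.ofReal (Real.sqrt (2*π) ^ d * (Real.sqrt A.det)⁻¹
            * exp (2⁻¹ * ((Q *ᵥ v) ⬝ᵥ (A⁻¹ *ᵥ (Q *ᵥ v))))) := by
    simp_rw [e3, Real.exp_add, ENNReal.ofReal_mul (exp_pos _).le]
    rw [lintegral_const_mul' _ _ ENNReal.ofReal_ne_top, masterL A hS hAs (Q *ᵥ v)]
  -- matrix identity
  have hmat : Q * A⁻¹ = Q + Q * A⁻¹ * Q := by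
    have h1 : Q * A⁻¹ * A = Q := by
      rw [Matrix.mul_assoc, Matrix.nonsing_inv_mul _ hAunit, Matrix.mul_one]
    have h2 : A + Q = 1 := by rw [hAdef]; abel
    calc Q * A⁻¹ = Q * A⁻¹ * (A + Q) := by rw [h2, Matrix.mul_one]
      _ = Q * A⁻¹ * A + Q * A⁻¹ * Q := by rw [Matrix.mul_add]
      _ = Q + Q * A⁻¹ * Q := by rw [h1]
  have idQ : v ⬝ᵥ ((Q * A⁻¹) *ᵥ v) = v ⬝ᵥ (Q *ᵥ v) + (Q *ᵥ v) ⬝ᵥ (A⁻¹ *ᵥ (Q *ᵥ v)) := by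
    have hQv : Q *ᵥ v = v ᵥ* Q := by rw [← Matrix.mulVec_transpose, hQs]
    rw [hmat, Matrix.add_mulVec, dotProduct_add]
    congr 1
    rw [Matrix.mulVec_mulVec, hQv, ← Matrix.dotProduct_mulVec, Matrix.mulVec_mulVec,
      ← Matrix.mul_assoc Q A⁻¹ Q]
  -- RHS value identity
  have hlogdet : exp (-2⁻¹ * Real.log A.det) = (Real.sqrt A.det)⁻¹ := by
    rw [show -2⁻¹ * Real.log A.det = Real.log A.det * (-2⁻¹) by ring, Real.exp_mul,
      Real.exp_log hdetpos, Real.rpow_neg hdetpos.le,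
      show ((2:ℝ)⁻¹ = 1/2) by norm_num, ← Real.sqrt_eq_rpow]
  have hRHS : exp (-2⁻¹ * Real.log A.det + 2⁻¹ * (v ⬝ᵥ ((Q * A⁻¹) *ᵥ v)))
      = exp (2⁻¹ * (v ⬝ᵥ (Q *ᵥ v)))
        * ((Real.sqrt A.det)⁻¹ * exp (2⁻¹ * ((Q *ᵥ v) ⬝ᵥ (A⁻¹ *ᵥ (Q *ᵥ v))))) := by
    rw [Real.exp_add, hlogdet, idQ, mul_add, Real.exp_add]
    ring
  -- measurability for Tonelli
  have hcont : Continuous fun p : (Fin d → ℝ) × (Fin d → ℝ) =>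
      exp ((Sᵀ *ᵥ (v + p.2)) ⬝ᵥ p.1 - 2⁻¹ * (p.2 ⬝ᵥ p.2)) := by
    apply Real.continuous_exp.comp
    apply Continuous.sub
    · exact continuous_dotProd
        ((continuous_mulVec' Sᵀ).comp (continuous_const.add continuous_snd)) continuous_fst
    · exact continuous_const.mul (continuous_dotProd continuous_snd continuous_snd)
  have hmeas : AEMeasurable (fun p : (Fin d → ℝ) × (Fin d → ℝ) =>
      ENNReal.ofReal (exp ((Sᵀ *ᵥ (v + p.2)) ⬝ᵥ p.1 - 2⁻¹ * (p.2 ⬝ᵥ p.2)))) (P.prod volume) :=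
    (hcont.measurable.ennreal_ofReal).aemeasurable
  have main : (∫⁻ ξ, ENNReal.ofReal (exp (v ⬝ᵥ (S *ᵥ ξ) + 2⁻¹ * ((S *ᵥ ξ) ⬝ᵥ (S *ᵥ ξ)))) ∂P)
      ≤ ENNReal.ofReal (exp (-2⁻¹ * Real.log A.det + 2⁻¹ * (v ⬝ᵥ ((Q * A⁻¹) *ᵥ v)))) := by
    set c0 : ENNReal := ENNReal.ofReal (Real.sqrt (2*π) ^ d) with hc0
    have hc0ne : c0 ≠ 0 := (ENNReal.ofReal_pos.2 (by positivity)).ne'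
    have hc0top : c0 ≠ ⊤ := ENNReal.ofReal_ne_top
    rw [← ENNReal.mul_le_mul_iff_right hc0ne hc0top]
    calc c0 * ∫⁻ ξ, ENNReal.ofReal (exp (v ⬝ᵥ (S *ᵥ ξ) + 2⁻¹ * ((S *ᵥ ξ) ⬝ᵥ (S *ᵥ ξ)))) ∂P
        = ∫⁻ ξ, c0 * ENNReal.ofReal (exp (v ⬝ᵥ (S *ᵥ ξ) + 2⁻¹ * ((S *ᵥ ξ) ⬝ᵥ (S *ᵥ ξ)))) ∂P :=
          (lintegral_const_mul' _ _ hc0top).symm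
      _ = ∫⁻ ξ, (∫⁻ h : Fin d → ℝ,
            ENNReal.ofReal (exp ((Sᵀ *ᵥ (v + h)) ⬝ᵥ ξ - 2⁻¹ * (h ⬝ᵥ h)))) ∂P :=
          lintegral_congr fun ξ => (key1 ξ).symm
      _ = ∫⁻ h : Fin d → ℝ,
            (∫⁻ ξ, ENNReal.ofReal (exp ((Sᵀ *ᵥ (v + h)) ⬝ᵥ ξ - 2⁻¹ * (h ⬝ᵥ h))) ∂P) :=
          lintegral_lintegral_swap hmeas
      _ ≤ ∫⁻ h : Fin d → ℝ,
            ENNReal.ofReal (exp (2⁻¹ * ((v + h) ⬝ᵥ (Q *ᵥ (v + h))) - 2⁻¹ * (h ⬝ᵥ h))) :=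
          lintegral_mono key2
      _ = ENNReal.ofReal (exp (2⁻¹ * (v ⬝ᵥ (Q *ᵥ v))))
            * ENNReal.ofReal (Real.sqrt (2*π) ^ d * (Real.sqrt A.det)⁻¹
                * exp (2⁻¹ * ((Q *ᵥ v) ⬝ᵥ (A⁻¹ *ᵥ (Q *ᵥ v))))) := key3
      _ = c0 * ENNReal.ofReal (exp (-2⁻¹ * Real.log A.det + 2⁻¹ * (v ⬝ᵥ ((Q * A⁻¹) *ᵥ v)))) := by
          rw [hRHS, hc0, ← ENNReal.ofReal_mul (exp_pos _).le,
            ← ENNReal.ofReal_mul (by positivity : (0:ℝ) ≤ Real.sqrt (2*π) ^ d)]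
          congr 1
          ring
  have hfpos : ∀ ξ : Fin d → ℝ,
      (0:ℝ) ≤ exp (v ⬝ᵥ (S *ᵥ ξ) + 2⁻¹ * ((S *ᵥ ξ) ⬝ᵥ (S *ᵥ ξ))) := fun ξ => (exp_pos _).le
  have hfcont : Continuous fun ξ : Fin d → ℝ =>
      exp (v ⬝ᵥ (S *ᵥ ξ) + 2⁻¹ * ((S *ᵥ ξ) ⬝ᵥ (S *ᵥ ξ))) := by
    apply Real.continuous_exp.comp
    exact (continuous_dotProd continuous_const (continuous_mulVec' S)).add
      (continuous_const.mul (continuous_dotProd (continuous_mulVec' S) (continuous_mulVec' S)))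
  have hfm := hfcont.aestronglyMeasurable (μ := P)
  constructor
  · refine ⟨hfm, ?_⟩
    rw [hasFiniteIntegral_iff_ofReal (Filter.Eventually.of_forall hfpos)]
    exact lt_of_le_of_lt main ENNReal.ofReal_lt_top
  · rw [integral_eq_lintegral_of_nonneg_ae (Filter.Eventually.of_forall hfpos) hfm]
    exact ENNReal.toReal_le_of_le_ofReal (exp_pos _).le main
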